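/- arXiv:1307.8245 — 4 statements merged into one kernel-verified Lean document; each statement's English description precedes it below -/
import Mathlib

section
/- Let v_ℒ ∈ B_cris,L satisfy φ(v_ℒ) = p·v_ℒ and v_ℒ − ℒ ∈ L⊗Fil^1 B_dR (for ℒ ∈ L⊗_{Q_p}K). In D ⊗_{K_0} B_st (D as above), the elements v_1 = t·f_3, v_2 = f_2 + (u+v_ℒ)f_3, v_3 = t^{-1}(f_1 + 2(u+v_ℒ)f_2 + (u+v_ℒ)²f_3) satisfy φ(v_i) = v_i and N(v_i) = 0 for all i. -/
namespace Stmt8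

variable {B : Type}

/-- `φ` on `D ⊗_{K₀} B_st` for the rank-3 module `D` with basis `f₁,f₂,f₃`,
`φ(f₁)=pf₁, φ(f₂)=f₂, φ(f₃)=p⁻¹f₃`; coordinates `(b₁,b₂,b₃) ↔ b₁f₁+b₂f₂+b₃f₃`. -/
def phi3 [CommRing B] (pe pinv : B) (φ : B → B) (x : B × B × B) : B × B × B :=
  (pe * φ x.1, φ x.2.1, pinv * φ x.2.2)

/-- the monodromy operator `N` on `D ⊗_{K₀} B_st` (`N(f₁)=2f₂, N(f₂)=f₃, N(f₃)=0`). -/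
def N3 [CommRing B] (N : B → B) (x : B × B × B) : B × B × B :=
  (N x.1, 2 * x.1 + N x.2.1, x.2.1 + N x.2.2)

end Stmt8

open Stmt8 in
/-- Let `v_ℒ ∈ B_cris,L` satisfy `φ(v_ℒ) = p·v_ℒ` and
`v_ℒ − ℒ ∈ L ⊗ Fil¹B_dR`.  In `D ⊗_{K₀} B_st` the elements `v₁ = t·f₃`,
`v₂ = f₂ + (u+v_ℒ)f₃`, `v₃ = t⁻¹(f₁ + 2(u+v_ℒ)f₂ + (u+v_ℒ)²f₃)` satisfy
`φ(vᵢ) = vᵢ` and `N(vᵢ) = 0`. -/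
theorem stmt_8 (p : ℕ) [Fact p.Prime] (B : Type) [CommRing B] [Algebra ℚ_[p] B]
    (φ : B →+* B) (N : B →+ B)
    (hLeib : ∀ a b : B, N (a * b) = a * N b + N a * b)
    (hNφ : ∀ b : B, N (φ b) = p * φ (N b))
    (t u tinv pinv : B)
    (hpinv : (p : B) * pinv = 1) (htinv : t * tinv = 1)
    (hφt : φ t = p * t) (hNt : N t = 0)
    (hφu : φ u = p * u) (hNu : N u = -1)
    (vL : B) (hφvL : φ vL = p * vL) (hNvL : N vL = 0)
    (Fil1 : AddSubgroup B) (ℒB : B) (hvLFil : vL - ℒB ∈ Fil1) :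
    (phi3 (p : B) pinv φ (0, 0, t) = (0, 0, t) ∧ N3 (⇑N) (0, 0, t) = 0)
    ∧ (phi3 (p : B) pinv φ (0, 1, u + vL) = (0, 1, u + vL)
        ∧ N3 (⇑N) (0, 1, u + vL) = 0)
    ∧ (phi3 (p : B) pinv φ (tinv, 2 * (u + vL) * tinv, (u + vL) ^ 2 * tinv)
          = (tinv, 2 * (u + vL) * tinv, (u + vL) ^ 2 * tinv)
        ∧ N3 (⇑N) (tinv, 2 * (u + vL) * tinv, (u + vL) ^ 2 * tinv) = 0) := by
  have hN1 : N (1 : B) = 0 := by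
    have h := hLeib (1:B) 1
    simp only [mul_one, one_mul] at h
    exact left_eq_add.mp h
  have hNtinv : N tinv = 0 := by
    have h := hLeib t tinv
    rw [htinv, hN1, hNt, zero_mul, add_zero] at h
    calc N tinv = (tinv * t) * N tinv := by rw [mul_comm tinv t, htinv, one_mul]
    _ = tinv * (t * N tinv) := by ring
    _ = 0 := by rw [← h]; ring
  have hφtinv : (p : B) * φ tinv = tinv := by
    have h : φ t * φ tinv = 1 := by rw [← map_mul, htinv, map_one]
    rw [hφt] at h
    calc (p : B) * φ tinv = ((p : B) * t * φ tinv) * tinv := by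
          rw [mul_assoc ((p:B)*t), mul_comm (φ tinv) tinv, ← mul_assoc,
            mul_assoc _ t tinv, htinv, mul_one]
        _ = tinv := by rw [h, one_mul]
  have hpinv' : pinv * (p : B) = 1 := by rw [mul_comm]; exact hpinv
  have hNuv : N (u + vL) = -1 := by rw [map_add, hNu, hNvL, add_zero]
  have hφuv : φ (u + vL) = p * (u + vL) := by rw [map_add, hφu, hφvL, mul_add]
  refine ⟨⟨?_, ?_⟩, ⟨?_, ?_⟩, ⟨?_, ?_⟩⟩
  · simp [phi3, hφt, ← mul_assoc, hpinv']
  · simp [N3, hNt]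
  · simp [phi3, hφuv, ← mul_assoc, hpinv']
  · simp [N3, hNuv, hN1]
  · have h2 : φ (2 * (u + vL) * tinv) = 2 * (u + vL) * tinv := by
      rw [map_mul, map_mul, hφuv, map_ofNat]
      calc (2:B) * ((p:B) * (u + vL)) * φ tinv
          = 2 * (u + vL) * ((p:B) * φ tinv) := by ring
        _ = 2 * (u + vL) * tinv := by rw [hφtinv]
    have h3 : pinv * φ ((u + vL) ^ 2 * tinv) = (u + vL) ^ 2 * tinv := by
      rw [map_mul, map_pow, hφuv]
      calc pinv * (((p:B) * (u + vL)) ^ 2 * φ tinv)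
          = ((p:B) * pinv) * (u + vL) ^ 2 * ((p:B) * φ tinv) := by ring
        _ = (u + vL) ^ 2 * tinv := by rw [hpinv, hφtinv, one_mul]
    simp only [phi3, h2, h3, hφtinv]
  · have e1 : N ((u + vL) * tinv) = -tinv := by
      rw [hLeib, hNtinv, hNuv, mul_zero, zero_add, neg_one_mul]
    have h2 : (2:B) * tinv + N (2 * (u + vL) * tinv) = 0 := by
      rw [mul_assoc, show ((2:B) * ((u+vL)*tinv)) = ((2:ℤ) : B) * ((u+vL)*tinv) by norm_num,
        ← zsmul_eq_mul, map_zsmul, e1, zsmul_eq_mul]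
      push_cast; ring
    have h3 : 2 * (u + vL) * tinv + N ((u + vL) ^ 2 * tinv) = 0 := by
      rw [hLeib, hNtinv, mul_zero, zero_add, pow_two, hLeib, hNuv]
      ring
    simp only [N3, hNtinv, h2, h3, Prod.mk_eq_zero]
    simp
end

section
/- Let L, K be p-adic fields as above, ℒ ∈ L⊗_{Q_p}K, and let W_1 ⊂ W_2 ⊂ W_3 be L-representations of G_K with W_1 ≅ L(1), W_2/W_1 ≅ L, W_3/W_2 ≅ L(−1), where the extension class of W_2 in H^1(G_K, L(1)) is (exp(ℒ)) + (p). If c ∈ H^1(G_K, W_3/W_1) vanishes in H^1(G_K, W_3/W_2) and lies in the image of H^1(G_K, W_3), then c comes from H^1(G_K, W_2/W_1) ≅ H^1(G_K, L), and under this identification c = (1/n)tr(γℒ)·ψ_1 + γ·ψ_2 for some γ ∈ L⊗_{Q_p}K. -/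
open scoped TensorProduct

/-- The trace map `tr : L ⊗[ℚ_p] K → L` induced by the field trace `tr_{K/ℚ_p}`. -/
noncomputable def trL (p : ℕ) [Fact p.Prime] (L K : Type) [Field L] [Field K]
    [Algebra ℚ_[p] L] [Algebra ℚ_[p] K] [FiniteDimensional ℚ_[p] K] :
    (L ⊗[ℚ_[p]] K) →ₗ[L] L :=
  (Algebra.TensorProduct.rid ℚ_[p] L L).toLinearMap.comp
    ((Algebra.trace ℚ_[p] K).baseChange L)

/-- Proposition `triancase`.  Let `W₁ ⊂ W₂ ⊂ W₃` be
`L`-representations of `G_K` with `W₁ ≅ L(1)`, `W₂/W₁ ≅ L`, `W₃/W₂ ≅ L(−1)`, the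
extension class of `W₂` in `H¹(G_K, L(1))` being `(exp ℒ) + (p)`.  Below:
`ι` identifies `L × (L⊗K)` (coordinates `(a₁, a₂) ↔ a₁ψ₁ + a₂ψ₂`) with
`H¹(G_K, W₂/W₁) = H¹(G_K, L)`; `i : H¹(W₂/W₁) → H¹(W₃/W₁)` and
`q : H¹(W₃/W₁) → H¹(W₃/W₂)` come from `0 → W₂/W₁ → W₃/W₁ → W₃/W₂ → 0`, with
`ker q ⊆ range i` (exactness, since `H⁰(W₃/W₂) = 0`); `π : H¹(W₃) → H¹(W₃/W₁)`;
`δ : H¹(W₃/W₁) → H²(W₁) ≅ L` is the connecting map, which on classes from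
`H¹(L)` is cup product with `(exp ℒ) + (p)`, i.e.
`δ(a₁ψ₁ + a₂ψ₂) = (a₁ − (1/n)tr(a₂ℒ))·(ψ₁∪(p))`, and `range π ⊆ ker δ`.
If `c ∈ H¹(G_K, W₃/W₁)` vanishes in `H¹(G_K, W₃/W₂)` and lies in the image of
`H¹(G_K, W₃)`, then `c` comes from `H¹(G_K, W₂/W₁) ≅ H¹(G_K, L)` and is of the form
`(1/n)tr(γℒ)·ψ₁ + γ·ψ₂` for some `γ ∈ L ⊗[ℚ_p] K`. -/
theorem stmt_10 (p n : ℕ) [Fact p.Prime] (L K : Type) [Field L] [Field K]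
    [Algebra ℚ_[p] L] [Algebra ℚ_[p] K] [FiniteDimensional ℚ_[p] K]
    (hn : Module.finrank ℚ_[p] K = n)
    (ℒ : L ⊗[ℚ_[p]] K)
    (H1W21 H1W31 H1W32 H1W3 : Type)
    [AddCommGroup H1W21] [AddCommGroup H1W31] [AddCommGroup H1W32] [AddCommGroup H1W3]
    [Module L H1W21] [Module L H1W31] [Module L H1W32] [Module L H1W3]
    (ι : (L × (L ⊗[ℚ_[p]] K)) ≃ₗ[L] H1W21)
    (i : H1W21 →ₗ[L] H1W31) (q : H1W31 →ₗ[L] H1W32) (π : H1W3 →ₗ[L] H1W31)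
    (hexact : ∀ c : H1W31, q c = 0 → ∃ y : H1W21, i y = c)
    (δ : H1W31 →ₗ[L] L)
    (hδ : ∀ (a₁ : L) (a₂ : L ⊗[ℚ_[p]] K),
        δ (i (ι (a₁, a₂))) = a₁ - (n : L)⁻¹ * trL p L K (a₂ * ℒ))
    (hδπ : ∀ w : H1W3, δ (π w) = 0)
    (c : H1W31) (hc1 : q c = 0) (hc2 : ∃ w : H1W3, π w = c) :
    ∃ γ : L ⊗[ℚ_[p]] K, c = i (ι ((n : L)⁻¹ * trL p L K (γ * ℒ), γ)) := by
  obtain ⟨y, hy⟩ := hexact c hc1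
  obtain ⟨w, hw⟩ := hc2
  set pr := ι.symm y with hpr
  have hy' : i (ι (pr.1, pr.2)) = c := by simpa [hpr] using hy
  have hδc : δ c = 0 := by rw [← hw]; exact hδπ w
  have h := hδ pr.1 pr.2
  rw [hy', hδc] at h
  have ha : pr.1 = (n : L)⁻¹ * trL p L K (pr.2 * ℒ) := by rw [eq_comm, sub_eq_zero] at h; exact h
  exact ⟨pr.2, by rw [← hy', ha]⟩
end

section
/- Let ω_0 ∈ B_cris satisfy φ^f(ω_0) − ω_0 = 1, and set ω_i = φ^i(ω_0) for 0 ≤ i < f. Let D' be the rank-2 (φ,N)-module over L⊗_{Q_p}K_0 ≅ ∏_{i=0}^{f-1}L with basis v'_1, v'_2, N = 0, φ(v'_1) = v'_1, φ(v'_2) = v'_2 + (α,0,…,0)v'_1 (α ∈ L), where φ permutes the factors cyclically. Then the element w = v'_2 + (−αω_i)_{0≤i<f}·v'_1 of D'⊗_{K_0}B_st satisfies φ(w) = w, and {v'_1, w} is a B_{e,L}-basis of X_st(D') = (D'⊗_{K_0}B_st)^{φ=1,N=0}. -/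
namespace Stmt11

variable {B : Type}

/-- The Frobenius on `D' ⊗_{K₀} B_st ≅ (∏_{i<f} B)²` acting on one coordinate block:
cyclic shift of the `f` factors (coming from `L ⊗ K₀ ≅ ∏_{i<f} L`) composed with the
crystalline Frobenius `φB` of `B`. -/
def Phi (f : ℕ) [NeZero f] (φB : B → B) (x : Fin f → B) : Fin f → B :=
  fun i => φB (x (i - 1))

end Stmt11

open Stmt11 in
/-- Let `ω₀ ∈ B_cris` satisfy `φ^f(ω₀) − ω₀ = 1`, `ω_i = φ^i(ω₀)`.
Let `D'` be the rank-2 `(φ,N)`-module over `L ⊗ K₀ ≅ ∏_{i<f} L` with basis `v'₁, v'₂`,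
`N = 0`, `φ(v'₁) = v'₁`, `φ(v'₂) = v'₂ + (α,0,…,0)v'₁`.  Coordinates:
`(x, y) ↔ x·v'₁ + y·v'₂` with `x, y ∈ ∏_{i<f} B`, and
`ΦM (x,y) = (Φx + (α,0,…,0)·Φy, Φy)`.  Then `w = v'₂ + (−αωᵢ)ᵢ·v'₁` satisfies
`ΦM w = w`, and `{v'₁, w}` is a `B_{e,L}`-basis of
`X_st(D') = (D' ⊗ B_st)^{φ=1,N=0}`: the `φ`-invariants are exactly the combinations
`c•v'₁ + d•w` with `φ`-invariant scalars `c, d` (i.e. `c, d ∈ B_{e,L}`), and such a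
combination vanishes only when `c = d = 0`. -/
theorem stmt_11 (L B : Type) [Field L] [CommRing B] [Algebra L B]
    (f : ℕ) [NeZero f]
    (φB : B →+* B) (hφL : ∀ l : L, φB (algebraMap L B l) = algebraMap L B l)
    (ω0 : B) (hω : φB^[f] ω0 = ω0 + 1)
    (α : L) :
    -- ω, αe, w, ΦM:
    ∀ ω : Fin f → B, (∀ i : Fin f, ω i = φB^[(i : ℕ)] ω0) →
    ∀ αe : Fin f → B, (∀ i : Fin f, αe i = if i = 0 then algebraMap L B α else 0) →
    ∀ w : (Fin f → B) × (Fin f → B),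
      (w = (fun i => -(algebraMap L B α) * ω i, 1)) →
    ∀ ΦM : ((Fin f → B) × (Fin f → B)) → ((Fin f → B) × (Fin f → B)),
      (∀ z, ΦM z = (Phi f φB z.1 + αe * Phi f φB z.2, Phi f φB z.2)) →
      (ΦM w = w)
      ∧ (∀ z, ΦM z = z ↔ ∃ c d : Fin f → B,
            Phi f φB c = c ∧ Phi f φB d = d ∧ z = (c + d * w.1, d))
      ∧ (∀ c d : Fin f → B, (c + d * w.1, d) = ((0 : Fin f → B), (0 : Fin f → B))
            → c = 0 ∧ d = 0) := by
  obtain ⟨m, rfl⟩ : ∃ m, f = m + 1 := ⟨f - 1, (Nat.succ_pred_eq_of_pos (Nat.pos_of_ne_zero (NeZero.ne f))).symm⟩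
  intro ω hωdef αe hαe w hw ΦM hΦM
  set a := algebraMap L B α with ha
  -- Frobenius step on ω
  have hstep : ∀ i : Fin (m + 1), φB (ω (i - 1)) = ω i + (if i = 0 then 1 else 0) := by
    intro i
    rcases eq_or_ne i 0 with hi | hi
    · subst hi
      rw [hωdef, hωdef]
      have h1 : ((0 - 1 : Fin (m + 1)) : ℕ) = m := by
        rw [Fin.coe_sub_one]; simp
      rw [h1, ← Function.iterate_succ_apply' φB m ω0]
      simpa using hω
    · rw [hωdef, hωdef]
      have hv : (i : ℕ) ≠ 0 := by
        exact fun h => hi (Fin.ext (by simp [h]))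
      have h1 : ((i - 1 : Fin (m + 1)) : ℕ) = (i : ℕ) - 1 := by
        rw [Fin.coe_sub_one, if_neg hi]
      have h2 : ((i : ℕ) - 1) + 1 = (i : ℕ) := Nat.succ_pred_eq_of_pos (Nat.pos_of_ne_zero hv)
      rw [h1, ← Function.iterate_succ_apply' φB, Nat.succ_eq_add_one, h2, if_neg hi, add_zero]
  -- Phi preserves ring operations (pointwise)
  have hPhi_add : ∀ x y : Fin (m + 1) → B, Phi (m + 1) φB (x + y) = Phi (m + 1) φB x + Phi (m + 1) φB y :=
    fun x y => funext fun i => map_add φB _ _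
  have hPhi_sub : ∀ x y : Fin (m + 1) → B, Phi (m + 1) φB (x - y) = Phi (m + 1) φB x - Phi (m + 1) φB y :=
    fun x y => funext fun i => map_sub φB _ _
  have hPhi_mul : ∀ x y : Fin (m + 1) → B, Phi (m + 1) φB (x * y) = Phi (m + 1) φB x * Phi (m + 1) φB y :=
    fun x y => funext fun i => map_mul φB _ _
  have hPhi_one : Phi (m + 1) φB (1 : Fin (m + 1) → B) = 1 :=
    funext fun i => map_one φB
  -- key: Phi w.1 = w.1 - αe
  have hwfix : Phi (m + 1) φB w.1 = w.1 - αe := by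
    funext i
    rw [hw]
    simp only [Phi, Pi.sub_apply]
    rw [map_mul, map_neg, hφL, hstep i, hαe i]
    rcases eq_or_ne i 0 with hi | hi <;> simp [hi] <;> ring
  have hw2 : w.2 = 1 := by rw [hw]
  refine ⟨?_, ?_, ?_⟩
  · rw [hΦM, hw2, hPhi_one, mul_one, hwfix]
    rw [Prod.ext_iff]
    constructor
    · simp
    · exact hw2.symm
  · intro z
    constructor
    · intro hz
      rw [hΦM, Prod.ext_iff] at hz
      obtain ⟨hz1, hz2⟩ := hz
      simp only at hz1 hz2
      refine ⟨z.1 - z.2 * w.1, z.2, ?_, hz2, ?_⟩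
      · rw [hz2] at hz1
        have hz1' : Phi (m + 1) φB z.1 = z.1 - αe * z.2 := eq_sub_of_add_eq hz1
        rw [hPhi_sub, hPhi_mul, hwfix, hz2, hz1']
        ring
      · rw [Prod.ext_iff]
        constructor
        · simp
        · rfl
    · rintro ⟨c, d, hc, hd, rfl⟩
      rw [hΦM, Prod.ext_iff]
      refine ⟨?_, hd⟩
      simp only
      rw [hPhi_add, hPhi_mul, hc, hd, hwfix]
      ring
  · intro c d h
    rw [Prod.ext_iff] at h
    obtain ⟨h1, h2⟩ := h
    simp only at h1 h2
    subst h2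
    constructor
    · simpa using h1
    · rfl
end

section
/- Let M be a module over S⊗K_0 ≅ ∏_{i=0}^{f-1}S with a φ^f-action, free of rank 1 over each factor copy appropriately, containing a φ-stable situation as follows: M = Hom(D_cris(V_0), D_cris(V)) is an extension of the trivial rank-1 φ-module by itself over S = L[x]/(x²). Then there exists a lift v_0 of the identity of End(D_cris(V_0)) in Hom(D_cris(V_0), D_cris(V)) such that in the basis {v_0, x·v_0}, the matrix of φ is [[1, (β'/α, 0, …, 0)],[0,1]], where β' is the derivative of β at x = 0 and the entry lives in L⊗_{Q_p}K_0 ≅ ∏_{i=0}^{f-1}L. Specifically, given any lift v'_0, the element v_0 = Σ_{i=0}^{f-1} φ^i((1,0,…,0)·v'_0) works. -/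
open scoped DualNumber

open Fin.NatCast Fin.CommRing in
/-- Let `S = L[x]/(x²)` and `R = S ⊗ K₀ ≅ ∏_{i<f} S`, with `σ` the
cyclic-shift Frobenius of `R`.  Let `M = Hom(D_cris(V₀), D_cris(V))`, an `R`-module
with a `σ`-semilinear `φ` such that `φ^f` acts by the scalar
`β/α = 1 + (β'/α)x` (where `α = β mod x`, `β'` the derivative of `β` at `x = 0`), and
let `π : M → M₀ = End(D_cris(V₀))` be the reduction (semilinear over
`R → ∏_{i<f} L`, intertwining `φ` with the `φ` of `M₀`).  Given any lift `v'₀` of the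
identity (`π v'₀ = Id`, with `Id` fixed by the Frobenius `φ₀` of `M₀`), the element
`v₀ = ∑_{i<f} φ^i((1,0,…,0)·v'₀)` is again a lift of the identity and satisfies
`φ(v₀) = v₀ + (β'/α, 0, …, 0)·(x·v₀)`, i.e. in the basis `{v₀, x·v₀}` the matrix of
`φ` is `[[1, (β'/α,0,…,0)], [0, 1]]`. -/
theorem stmt_15 (L : Type) [Field L] (f : ℕ) [NeZero f]
    (M : Type) [AddCommGroup M] [Module (Fin f → DualNumber L) M]
    (σ : (Fin f → DualNumber L) →+* (Fin f → DualNumber L))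
    (hσ : ∀ (r : Fin f → DualNumber L) (i : Fin f), σ r i = r (i + 1))
    (φM : M →+ M)
    (hsl : ∀ (r : Fin f → DualNumber L) (m : M), φM (r • m) = σ r • φM m)
    (β : DualNumber L) (hα : β.fst ≠ 0)
    (hf : ∀ m : M,
      φM^[f] m = ((fun _ => 1 + (β.snd / β.fst) • DualNumber.eps : Fin f → DualNumber L)) • m)
    (M0 : Type) [AddCommGroup M0] [Module (Fin f → L) M0]
    (π : M →+ M0)
    (hπs : ∀ (r : Fin f → DualNumber L) (m : M),
      π (r • m) = (fun i => (r i).fst) • π m)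
    (φM0 : M0 →+ M0)
    (hπφ : ∀ m : M, π (φM m) = φM0 (π m))
    (hsl0 : ∀ (s : Fin f → L) (m : M0), φM0 (s • m) = (fun i => s (i + 1)) • φM0 m)
    (idM0 : M0) (hid : φM0 idM0 = idM0)
    (v0' : M) (hv0' : π v0' = idM0) :
    ∀ e0 : Fin f → DualNumber L, (∀ i, e0 i = if i = 0 then 1 else 0) →
    ∀ v0 : M, v0 = ∑ i ∈ Finset.range f, φM^[i] (e0 • v0') →
      π v0 = idM0
      ∧ φM v0 = v0
          + ((fun i => if i = 0 then (β.snd / β.fst) • DualNumber.eps else 0 :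
              Fin f → DualNumber L)) • v0 := by
  intro e0 he0 v0 hv0
  set δ : Fin f → DualNumber L :=
    (fun i => if i = 0 then (β.snd / β.fst) • DualNumber.eps else 0) with hδ
  -- iterated semilinearity on M
  have key : ∀ (n : ℕ) (r : Fin f → DualNumber L) (m : M),
      φM^[n] (r • m) = (fun i => r (i + (n : Fin f))) • φM^[n] m := by
    intro n
    induction n with
    | zero => intro r m; simp
    | succ n ih =>
      intro r m
      rw [Function.iterate_succ_apply, hsl, ih, Function.iterate_succ_apply]
      congr 1
      funext i
      rw [hσ]
      congr 1
      push_cast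
      ring
  -- iterated semilinearity on M0
  have key0 : ∀ (n : ℕ) (s : Fin f → L) (m : M0),
      φM0^[n] (s • m) = (fun i => s (i + (n : Fin f))) • φM0^[n] m := by
    intro n
    induction n with
    | zero => intro s m; simp
    | succ n ih =>
      intro s m
      rw [Function.iterate_succ_apply, hsl0, ih, Function.iterate_succ_apply]
      congr 1
      funext i
      congr 1
      push_cast
      ring
  have hcomm : ∀ (n : ℕ) (m : M), π (φM^[n] m) = φM0^[n] (π m) := by
    intro n
    induction n with
    | zero => intro m; simp
    | succ n ih =>
      intro m
      rw [Function.iterate_succ_apply', hπφ, ih, Function.iterate_succ_apply']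
  constructor
  · -- π v0 = idM0
    rw [hv0, map_sum]
    have hterm : ∀ i : ℕ, π (φM^[i] (e0 • v0'))
        = (fun j => (e0 (j + (i : Fin f))).fst) • idM0 := by
      intro i
      rw [hcomm, hπs, hv0', key0, Function.iterate_fixed hid]
    simp_rw [hterm]
    rw [← Finset.sum_smul]
    have hsum : (∑ i ∈ Finset.range f, (fun j => (e0 (j + (i : Fin f))).fst))
        = (1 : Fin f → L) := by
      funext j
      rw [Finset.sum_apply, Pi.one_apply]
      rw [← Fin.sum_univ_eq_sum_range (fun i => (e0 (j + (i : Fin f))).fst) f]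
      simp only [Fin.cast_val_eq_self, he0]
      have : ∀ i : Fin f, (if j + i = 0 then (1 : DualNumber L) else 0).fst
          = if i = -j then (1 : L) else 0 := by
        intro i
        by_cases h : j + i = 0
        · have : i = -j := by linear_combination h
          simp [h, this]
        · have : ¬ (i = -j) := fun hh => h (by rw [hh]; ring)
          simp [h, this]
      simp_rw [this]
      simp
    rw [hsum, one_smul]
  · -- φ v0 = v0 + δ • v0
    have hwf : φM^[f] (e0 • v0') = e0 • v0' + δ • v0' := by
      rw [hf, ← mul_smul, ← add_smul]
      congr 1
      funext j
      by_cases h : j = 0 <;>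
        simp [he0, h, hδ, Pi.mul_apply]
    have hshift : φM v0 = v0 + δ • v0' := by
      rw [hv0, map_sum]
      have : ∀ i ∈ Finset.range f,
          φM (φM^[i] (e0 • v0')) = φM^[i+1] (e0 • v0') := by
        intro i _
        rw [Function.iterate_succ_apply']
      rw [Finset.sum_congr rfl this]
      have h1 := Finset.sum_range_succ' (fun i => φM^[i] (e0 • v0')) f
      have h2 := Finset.sum_range_succ (fun i => φM^[i] (e0 • v0')) f
      rw [← hv0] at h2
      have : (∑ i ∈ Finset.range f, φM^[i+1] (e0 • v0'))
          = v0 + φM^[f] (e0 • v0') - φM^[0] (e0 • v0') := by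
        rw [← h2, h1]
        abel
      rw [this, hwf, hv0]
      simp only [Function.iterate_zero, id_eq]
      abel
    have hδv0 : δ • v0 = δ • v0' := by
      rw [hv0, Finset.smul_sum]
      rw [Finset.sum_eq_single 0]
      · simp only [Function.iterate_zero, id_eq, ← mul_smul]
        congr 1
        funext j
        by_cases h : j = 0 <;> simp [hδ, he0, h]
      · intro i hi hne
        rw [key, ← mul_smul]
        convert zero_smul (Fin f → DualNumber L) _
        funext j
        by_cases h : j = 0
        · have hif : (i : Fin f) ≠ 0 := by
            rw [Ne, Fin.natCast_eq_zero]
            intro hdvd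
            rcases hdvd with ⟨c, hc⟩
            rcases c with _ | c
            · exact hne (by omega)
            · have h1 := Finset.mem_range.mp hi
              have h2 : f ≤ f * (c + 1) := Nat.le_mul_of_pos_right f (Nat.succ_pos c)
              omega
          simp [hδ, he0, h, hif]
        · simp [hδ, h]
      · intro h
        exact absurd (Finset.mem_range.mpr (NeZero.pos f)) h
    rw [hshift, hδv0]
end
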